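/- Let W ⊆ ℂⁿ be a set invariant under the n-torus action (if z ∈ W and θ ∈ ℝⁿ then (e^{iθ₁}z₁, …, e^{iθₙ}zₙ) ∈ W) and weighted homogeneous (if z ∈ W and t ∈ [0,1] then (t^{α₁}z₁, …, t^{αₙ}zₙ) ∈ W for a fixed α ∈ ℕⁿ). Suppose there is a polyradius (r₁, …, rₙ) with rⱼ > 0 such that every z with |zⱼ| = rⱼ for all j belongs to W. Then every point p of the closed polydisc {z : |zⱼ| ≤ rⱼ for all j} lies in the image of an analytic disc attached to W. -/

import Mathlib

open Metric Complex Set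

theorem polydisc_in_disc_hull_of_torus_invariant_set
    (n : ℕ) (W : Set (Fin n → ℂ)) (α : Fin n → ℕ) (hα : ∀ i, 0 < α i)
    (htorus : ∀ z ∈ W, ∀ θ : Fin n → ℝ,
      (fun i => Complex.exp ((θ i : ℂ) * Complex.I) * z i) ∈ W)
    (hhom : ∀ z ∈ W, ∀ t ∈ Icc (0 : ℝ) 1,
      (fun i => ((t : ℂ)) ^ (α i) * z i) ∈ W)
    (r : Fin n → ℝ) (hr : ∀ i, 0 < r i)
    (hW : ∀ z : Fin n → ℂ, (∀ i, ‖z i‖ = r i) → z ∈ W) :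
    ∀ p : Fin n → ℂ, (∀ i, ‖p i‖ ≤ r i) →
      ∃ φ : ℂ → (Fin n → ℂ),
        ContinuousOn φ (closedBall 0 1) ∧
        DifferentiableOn ℂ φ (ball 0 1) ∧
        φ '' sphere (0 : ℂ) 1 ⊆ W ∧
        p ∈ φ '' ball (0 : ℂ) 1 := by
  intro p hp
  obtain ⟨a, ha⟩ : ∃ a : Fin n → ℂ, a = fun i => p i / (r i : ℂ) := ⟨_, rfl⟩
  have hna : ∀ i, ‖a i‖ = ‖p i‖ / r i := by
    intro i
    simp [ha, norm_div, Complex.norm_real, abs_of_pos (hr i)]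
  have hlt : ∀ i, ‖p i‖ < r i → ‖a i‖ < 1 := by
    intro i h
    rw [hna i]
    exact (div_lt_one (hr i)).2 h
  -- denominator is nonzero on the closed ball
  have hden : ∀ i, ‖p i‖ < r i → ∀ ζ : ℂ, ‖ζ‖ ≤ 1 →
      1 + (starRingEnd ℂ) (a i) * ζ ≠ 0 := by
    intro i h ζ hζ h0
    have : ‖(starRingEnd ℂ) (a i) * ζ‖ < 1 := by
      rw [norm_mul, RCLike.norm_conj]
      calc ‖a i‖ * ‖ζ‖ ≤ ‖a i‖ * 1 := by
            exact mul_le_mul_of_nonneg_left hζ (norm_nonneg _)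
        _ = ‖a i‖ := mul_one _
        _ < 1 := hlt i h
    have h1 : (starRingEnd ℂ) (a i) * ζ = -1 := by linear_combination h0
    rw [h1] at this
    simp at this
  refine ⟨fun ζ i => if ‖p i‖ < r i then
      (r i : ℂ) * (ζ + a i) / (1 + (starRingEnd ℂ) (a i) * ζ) else p i, ?_, ?_, ?_, ?_⟩
  · -- continuity on closed ball
    apply continuousOn_pi.2
    intro i
    by_cases h : ‖p i‖ < r i
    · simp only [if_pos h]
      apply ContinuousOn.div
      · fun_prop
      · fun_prop
      · intro ζ hζ
        exact hden i h ζ (by simpa [Complex.dist_eq] using mem_closedBall.1 hζ)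
    · simp only [if_neg h]
      exact continuousOn_const
  · -- differentiability on ball
    apply differentiableOn_pi.2
    intro i
    by_cases h : ‖p i‖ < r i
    · simp only [if_pos h]
      apply DifferentiableOn.div
      · fun_prop
      · fun_prop
      · intro ζ hζ
        exact hden i h ζ (le_of_lt (by simpa [Complex.dist_eq] using mem_ball.1 hζ))
    · simp only [if_neg h]
      exact differentiableOn_const _
  · -- boundary in W
    rintro x ⟨ζ, hζ, rfl⟩
    have hζ1 : ‖ζ‖ = 1 := by simpa [Complex.dist_eq] using mem_sphere.1 hζ
    apply hW
    intro i
    by_cases h : ‖p i‖ < r i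
    · simp only [if_pos h]
      have hkey : ‖ζ + a i‖ = ‖1 + (starRingEnd ℂ) (a i) * ζ‖ := by
        have hc : (starRingEnd ℂ) (ζ + a i)
            = (starRingEnd ℂ) ζ * (1 + (starRingEnd ℂ) (a i) * ζ) := by
          have : ζ * (starRingEnd ℂ) ζ = 1 := by
            rw [Complex.mul_conj]
            norm_cast
            simp [Complex.normSq_eq_norm_sq, hζ1]
          simp only [map_add]
          linear_combination -(starRingEnd ℂ) (a i) * this
        calc ‖ζ + a i‖ = ‖(starRingEnd ℂ) (ζ + a i)‖ := (RCLike.norm_conj _).symm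
          _ = ‖(starRingEnd ℂ) ζ‖ * ‖1 + (starRingEnd ℂ) (a i) * ζ‖ := by
              rw [hc, norm_mul]
          _ = ‖1 + (starRingEnd ℂ) (a i) * ζ‖ := by
              rw [RCLike.norm_conj, hζ1, one_mul]
      have hd0 : 1 + (starRingEnd ℂ) (a i) * ζ ≠ 0 := hden i h ζ (le_of_eq hζ1)
      rw [norm_div, norm_mul, hkey, mul_div_assoc,
        div_self (by simpa using norm_ne_zero_iff.2 hd0), mul_one,
        Complex.norm_real, Real.norm_eq_abs, abs_of_pos (hr i)]
    · simp only [if_neg h]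
      exact le_antisymm (hp i) (not_lt.1 h)
  · -- p is the center
    refine ⟨0, by simp, ?_⟩
    funext i
    by_cases h : ‖p i‖ < r i
    · have hrne : (r i : ℂ) ≠ 0 := by exact_mod_cast (hr i).ne'
      simp only [if_pos h, ha, mul_zero, add_zero, zero_add, div_one]
      field_simp
    · simp only [if_neg h]
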